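/- Let R = k⟨X⟩ * k[Y] with X, Y sets and k a field, and fix a strict total order on the monoid M = ⟨X⟩ * [Y]. Let a, b ∈ R be homogeneous, and let x ∈ supp(a), y ∈ supp(b) satisfy: (1) s(x) is maximal among {s(w) : w ∈ supp(a) ∩ [x]}, or x is non-pure and s(x) is maximal among {s(w) : w ∈ supp(a) ∩ [x], p(w) = p(x)}; (2) p(y) is maximal among {p(w) : w ∈ supp(b) ∩ [y]}, or y is non-pure and p(y) is maximal among {p(w) : w ∈ supp(b) ∩ [y], s(w) = s(y)}. Then xy ∈ supp(ab). -/

import Mathlib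

/-- Words over `X ⊔ Y`. -/
abbrev FM (X Y : Type) := FreeMonoid (X ⊕ Y)

/-- Swapping two adjacent `Y`-letters. -/
def yRel (X Y : Type) : FM X Y → FM X Y → Prop := fun a b =>
  ∃ (u v : FM X Y) (y₁ y₂ : Y),
    a = u * FreeMonoid.of (Sum.inr y₁) * FreeMonoid.of (Sum.inr y₂) * v ∧
    b = u * FreeMonoid.of (Sum.inr y₂) * FreeMonoid.of (Sum.inr y₁) * v

/-- The congruence generated by swaps of adjacent `Y`-letters. -/
def coCon (X Y : Type) : Con (FM X Y) := conGen (yRel X Y)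

/-- The coproduct monoid `⟨X⟩ * [Y]`. -/
abbrev CoprodM (X Y : Type) := (coCon X Y).Quotient

/-- Length descends to the quotient. -/
def lenHom (X Y : Type) : CoprodM X Y →* Multiplicative ℕ :=
  Con.lift _ (FreeMonoid.lift fun _ => Multiplicative.ofAdd 1) (by
    refine Con.conGen_le.mpr ?_
    rintro a b ⟨u, v, y₁, y₂, rfl, rfl⟩
    simp [Con.ker_rel, map_mul])

/-- Length of an element of the coproduct monoid. -/
def len {X Y : Type} (w : CoprodM X Y) : ℕ := Multiplicative.toAdd (lenHom X Y w)

/-- A monoid recording the commuting prefix and suffix. -/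
inductive PS (Y : Type) where
  | pure : Multiset Y → PS Y
  | mixed : Multiset Y → Multiset Y → PS Y

def PS.mul {Y : Type} : PS Y → PS Y → PS Y
  | .pure c, .pure d => .pure (c + d)
  | .pure c, .mixed p s => .mixed (c + p) s
  | .mixed p s, .pure d => .mixed p (s + d)
  | .mixed p _, .mixed _ s' => .mixed p s'

instance {Y : Type} : Monoid (PS Y) where
  mul := PS.mul
  one := .pure 0
  mul_assoc a b c := by
    rcases a <;> rcases b <;> rcases c <;>
      simp [(· * ·), PS.mul, add_assoc]
  one_mul a := by rcases a <;> simp [(· * ·), PS.mul]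
  mul_one a := by rcases a <;> simp [(· * ·), PS.mul]

/-- The prefix/suffix data descends to the quotient. -/
def psHom (X Y : Type) : CoprodM X Y →* PS Y :=
  Con.lift _ (FreeMonoid.lift fun a =>
      match a with
      | Sum.inl _ => PS.mixed 0 0
      | Sum.inr y => PS.pure {y}) (by
    refine Con.conGen_le.mpr ?_
    rintro a b ⟨u, v, y₁, y₂, rfl, rfl⟩
    have key : (PS.pure {y₁} : PS Y) * PS.pure {y₂} = PS.pure {y₂} * PS.pure {y₁} := by
      show PS.mul _ _ = PS.mul _ _
      simp [PS.mul, add_comm]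
    simp only [Con.ker_rel, map_mul, FreeMonoid.lift_eval_of]
    rw [mul_assoc _ (PS.pure {y₁}), key, mul_assoc, ← mul_assoc, ← mul_assoc])

/-- The commuting prefix of an element, as a multiset of `Y`-variables. -/
def pre {X Y : Type} (w : CoprodM X Y) : Multiset Y :=
  match psHom X Y w with
  | .pure c => c
  | .mixed p _ => p

/-- The commuting suffix of an element, as a multiset of `Y`-variables. -/
def suf {X Y : Type} (w : CoprodM X Y) : Multiset Y :=
  match psHom X Y w with
  | .pure c => c
  | .mixed _ s => s

/-- The canonical embedding of the free abelian monoid `[Y]` (words in `Y`). -/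
def yEmb (X Y : Type) : FreeMonoid Y →* CoprodM X Y :=
  (Con.mk' (coCon X Y)).comp (FreeMonoid.map Sum.inr)

/-- An element is pure if it involves only `Y`-variables. -/
def IsPure {X Y : Type} (w : CoprodM X Y) : Prop := w ∈ MonoidHom.mrange (yEmb X Y)

/-- The pure element of the coproduct monoid corresponding to a multiset of
`Y`-variables. -/
noncomputable def pureElt {X Y : Type} (c : Multiset Y) : CoprodM X Y :=
  yEmb X Y (FreeMonoid.ofList c.toList)

/-- The equivalence relation `∼`: equal lengths and either both pure, or equal
prefix lengths, equal middle parts and equal suffix lengths. -/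
noncomputable def Sim {X Y : Type} (u v : CoprodM X Y) : Prop :=
  len u = len v ∧
  ((IsPure u ∧ IsPure v) ∨
    (¬ IsPure u ∧ ¬ IsPure v ∧
      Multiset.card (pre u) = Multiset.card (pre v) ∧
      Multiset.card (suf u) = Multiset.card (suf v) ∧
      ∃ m : CoprodM X Y,
        u = pureElt (pre u) * m * pureElt (suf u) ∧
        v = pureElt (pre v) * m * pureElt (suf v)))


namespace CoprodAux

variable {X Y : Type}

abbrev NFL (X Y : Type) := List (X × Multiset Y)
abbrev NF (X Y : Type) := Multiset Y × NFL X Y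

/-- add a multiset to the last gap -/
def addLast : NFL X Y → Multiset Y → NFL X Y
  | [], _ => []
  | [a], d => [(a.1, a.2 + d)]
  | a :: l, d => a :: addLast l d

@[simp] theorem addLast_nil (d : Multiset Y) : addLast ([] : NFL X Y) d = [] := rfl
@[simp] theorem addLast_singleton (a : X × Multiset Y) (d : Multiset Y) :
    addLast [a] d = [(a.1, a.2 + d)] := rfl
theorem addLast_cons {l : NFL X Y} (h : l ≠ []) (a : X × Multiset Y) (d : Multiset Y) :
    addLast (a :: l) d = a :: addLast l d := by
  cases l with
  | nil => exact absurd rfl h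
  | cons b l => rfl

@[simp] theorem addLast_length (l : NFL X Y) (d : Multiset Y) :
    (addLast l d).length = l.length := by
  induction l with
  | nil => rfl
  | cons a l ih =>
    cases l with
    | nil => rfl
    | cons b l => rw [addLast_cons (by simp)]; simp_all

theorem addLast_ne_nil {l : NFL X Y} (h : l ≠ []) (d : Multiset Y) :
    addLast l d ≠ [] := by
  intro hc
  have := addLast_length l d
  rw [hc] at this
  exact h (List.length_eq_zero_iff.mp this.symm)

theorem addLast_append {k : NFL X Y} (l : NFL X Y) (hk : k ≠ []) (d : Multiset Y) :
    addLast (l ++ k) d = l ++ addLast k d := by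
  induction l with
  | nil => rfl
  | cons a l ih =>
    rw [List.cons_append, addLast_cons (by simp [hk]), ih, List.cons_append]

@[simp] theorem addLast_concat (l : NFL X Y) (p : X) (g d : Multiset Y) :
    addLast (l ++ [(p, g)]) d = l ++ [(p, g + d)] := by
  rw [addLast_append l (by simp), addLast_singleton]

theorem exists_concat {l : NFL X Y} (h : l ≠ []) :
    ∃ l' p g, l = l' ++ [(p, g)] := by
  obtain ⟨l', ⟨p, g⟩, rfl⟩ := List.eq_nil_or_concat l |>.resolve_left h
  exact ⟨l', p, g, List.concat_eq_append⟩

theorem addLast_addLast {l : NFL X Y} (h : l ≠ []) (d e : Multiset Y) :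
    addLast (addLast l d) e = addLast l (d + e) := by
  obtain ⟨l', p, g, rfl⟩ := exists_concat h
  simp [add_assoc]

@[simp] theorem addLast_zero (l : NFL X Y) : addLast l 0 = l := by
  rcases eq_or_ne l [] with rfl | h
  · rfl
  · obtain ⟨l', p, g, rfl⟩ := exists_concat h
    simp

/-- total number of letters in the list part -/
def S (l : NFL X Y) : ℕ := (l.map fun p => 1 + Multiset.card p.2).sum

@[simp] theorem S_nil : S ([] : NFL X Y) = 0 := rfl
@[simp] theorem S_cons (a : X × Multiset Y) (l : NFL X Y) :
    S (a :: l) = 1 + Multiset.card a.2 + S l := by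
  simp [S, add_assoc]
@[simp] theorem S_append (l k : NFL X Y) : S (l ++ k) = S l + S k := by
  simp [S]
theorem S_addLast {l : NFL X Y} (h : l ≠ []) (d : Multiset Y) :
    S (addLast l d) = S l + Multiset.card d := by
  obtain ⟨l', p, g, rfl⟩ := exists_concat h
  simp [S]; omega
theorem one_le_S {l : NFL X Y} (h : l ≠ []) : 1 ≤ S l := by
  cases l with
  | nil => exact absurd rfl h
  | cons a l => simp; omega

/-- last gap -/
def lastG : NFL X Y → Multiset Y
  | [] => 0
  | [a] => a.2
  | _ :: l => lastG l

@[simp] theorem lastG_nil : lastG ([] : NFL X Y) = 0 := rfl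
@[simp] theorem lastG_singleton (a : X × Multiset Y) : lastG [a] = a.2 := rfl
theorem lastG_cons {l : NFL X Y} (h : l ≠ []) (a : X × Multiset Y) :
    lastG (a :: l) = lastG l := by
  cases l with
  | nil => exact absurd rfl h
  | cons b l => rfl
theorem lastG_append {k : NFL X Y} (l : NFL X Y) (hk : k ≠ []) :
    lastG (l ++ k) = lastG k := by
  induction l with
  | nil => rfl
  | cons a l ih => rw [List.cons_append, lastG_cons (by simp [hk]), ih]
@[simp] theorem lastG_concat (l : NFL X Y) (p : X) (g : Multiset Y) :
    lastG (l ++ [(p, g)]) = g := by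
  rw [lastG_append l (by simp), lastG_singleton]
theorem lastG_addLast {l : NFL X Y} (h : l ≠ []) (d : Multiset Y) :
    lastG (addLast l d) = lastG l + d := by
  obtain ⟨l', p, g, rfl⟩ := exists_concat h
  simp
theorem S_lastG {l : NFL X Y} (h : l ≠ []) :
    1 + Multiset.card (lastG l) ≤ S l := by
  obtain ⟨l', p, g, rfl⟩ := exists_concat h
  simp [S]

/-- multiplication on normal forms -/
def nmul : NF X Y → NF X Y → NF X Y
  | (c, []), (d, k) => (c + d, k)
  | (c, l), (d, k) => (c, addLast l d ++ k)

@[simp] theorem nmul_nil (c d : Multiset Y) (k : NFL X Y) :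
    nmul (c, []) (d, k) = (c + d, k) := rfl
theorem nmul_cons (c : Multiset Y) (a : X × Multiset Y) (l : NFL X Y) (d : Multiset Y)
    (k : NFL X Y) : nmul (c, a :: l) (d, k) = (c, addLast (a :: l) d ++ k) := rfl
theorem nmul_ne_nil {l : NFL X Y} (h : l ≠ []) (c d : Multiset Y) (k : NFL X Y) :
    nmul (c, l) (d, k) = (c, addLast l d ++ k) := by
  cases l with
  | nil => exact absurd rfl h
  | cons a l => rfl

instance : Monoid (NF X Y) where
  mul := nmul
  one := (0, [])
  mul_assoc a b c := by
    show nmul (nmul a b) c = nmul a (nmul b c)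
    obtain ⟨c₁, l₁⟩ := a; obtain ⟨c₂, l₂⟩ := b; obtain ⟨c₃, l₃⟩ := c
    rcases eq_or_ne l₁ [] with rfl | h₁ <;> rcases eq_or_ne l₂ [] with rfl | h₂
    · simp [add_assoc]
    · rw [nmul_nil, nmul_ne_nil h₂, nmul_ne_nil h₂, nmul_nil]
    · rw [nmul_ne_nil h₁, nmul_nil, List.append_nil,
        nmul_ne_nil (addLast_ne_nil h₁ _), nmul_ne_nil h₁, addLast_addLast h₁]
    · rw [nmul_ne_nil h₁, nmul_ne_nil h₂,
        nmul_ne_nil (show addLast l₁ c₂ ++ l₂ ≠ [] by simp [h₂]),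
        nmul_ne_nil h₁, addLast_append _ h₂]
      simp
  one_mul a := by
    obtain ⟨c, l⟩ := a
    show nmul (0, []) (c, l) = (c, l)
    rw [nmul_nil, zero_add]
  mul_one a := by
    obtain ⟨c, l⟩ := a
    show nmul (c, l) (0, []) = (c, l)
    rcases eq_or_ne l [] with rfl | h
    · rw [nmul_nil, add_zero]
    · obtain ⟨l', p, g, rfl⟩ := exists_concat h
      rw [nmul_ne_nil (by simp), List.append_nil, addLast_concat, add_zero]


theorem mul_def (s t : NF X Y) : s * t = nmul s t := by rfl
theorem one_def : (1 : NF X Y) = ((0 : Multiset Y), ([] : NFL X Y)) := by rfl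

end CoprodAux
namespace CoprodAux
variable {X Y : Type}

/-- the letter map to NF -/
def nfLetter : X ⊕ Y → NF X Y
  | Sum.inl x => ((0 : Multiset Y), [(x, (0 : Multiset Y))])
  | Sum.inr y => (({y} : Multiset Y), ([] : NFL X Y))

/-- the normal form homomorphism -/
def nfHom (X Y : Type) : CoprodM X Y →* NF X Y :=
  Con.lift _ (FreeMonoid.lift (nfLetter (X := X) (Y := Y))) (by
    refine Con.conGen_le.mpr ?_
    rintro a b ⟨u, v, y₁, y₂, rfl, rfl⟩
    have key : (nfLetter (Sum.inr y₁) : NF X Y) * nfLetter (Sum.inr y₂) =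
        nfLetter (Sum.inr y₂) * nfLetter (Sum.inr y₁) := by
      show nmul _ _ = nmul _ _
      simp [nfLetter, add_comm]
    simp only [Con.ker_rel, map_mul, FreeMonoid.lift_eval_of]
    rw [mul_assoc _ (nfLetter (Sum.inr y₁)), key, mul_assoc, ← mul_assoc, ← mul_assoc])

theorem nfHom_mk (w : FM X Y) :
    nfHom X Y (w : CoprodM X Y) = FreeMonoid.lift nfLetter w := rfl

theorem yEmb_perm {l₁ l₂ : List Y} (h : l₁.Perm l₂) :
    yEmb X Y (FreeMonoid.ofList l₁) = yEmb X Y (FreeMonoid.ofList l₂) := by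
  induction h with
  | nil => rfl
  | cons z _ ih =>
    rw [FreeMonoid.ofList_cons, FreeMonoid.ofList_cons, map_mul, map_mul, ih]
  | swap z₁ z₂ t =>
    rw [FreeMonoid.ofList_cons, FreeMonoid.ofList_cons, FreeMonoid.ofList_cons,
      FreeMonoid.ofList_cons]
    show (Con.mk' (coCon X Y)).comp (FreeMonoid.map Sum.inr) _ =
      (Con.mk' (coCon X Y)).comp (FreeMonoid.map Sum.inr) _
    simp only [MonoidHom.comp_apply, map_mul, FreeMonoid.map_of]
    rw [← mul_assoc, ← mul_assoc]
    have : ∀ c₁ c₂ : Y, (FreeMonoid.map Sum.inr (FreeMonoid.ofList t) : FM X Y) =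
        1 * FreeMonoid.of (Sum.inr c₁) * FreeMonoid.of (Sum.inr c₂) *
          FreeMonoid.map Sum.inr (FreeMonoid.ofList t) →
        True := fun _ _ _ => trivial
    refine (Con.eq _).mpr ?_
    exact ConGen.Rel.of _ _
      ⟨1, FreeMonoid.map Sum.inr (FreeMonoid.ofList t), z₂, z₁, by
        rw [one_mul], by rw [one_mul]⟩
  | trans _ _ ih₁ ih₂ => rw [ih₁, ih₂]

theorem pureElt_perm {l : List Y} {c : Multiset Y} (h : (l : Multiset Y) = c) :
    pureElt (X := X) c = yEmb X Y (FreeMonoid.ofList l) := by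
  refine yEmb_perm ?_
  rw [← Multiset.coe_eq_coe, Multiset.coe_toList, h]

theorem pureElt_add (c d : Multiset Y) :
    pureElt (X := X) (c + d) = pureElt c * pureElt d := by
  rw [pureElt_perm (l := c.toList ++ d.toList) (by rw [← Multiset.coe_add, Multiset.coe_toList, Multiset.coe_toList]), pureElt,
    pureElt, FreeMonoid.ofList_append, map_mul]

@[simp] theorem pureElt_zero : pureElt (X := X) (0 : Multiset Y) = 1 := by
  rw [pureElt_perm (l := []) (by simp)]
  exact map_one _

theorem pureElt_single (y : Y) :
    pureElt (X := X) ({y} : Multiset Y) = Con.mk' (coCon X Y) (FreeMonoid.of (Sum.inr y)) := by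
  rw [pureElt_perm (l := [y]) (by simp)]
  rfl

/-- the X-letter generator -/
def mkX (x : X) : CoprodM X Y := Con.mk' (coCon X Y) (FreeMonoid.of (Sum.inl x))

/-- interpret the list part back into the monoid -/
noncomputable def psiL : NFL X Y → CoprodM X Y
  | [] => 1
  | (x, g) :: l => mkX x * pureElt g * psiL l

@[simp] theorem psiL_nil : psiL ([] : NFL X Y) = 1 := rfl
theorem psiL_cons (x : X) (g : Multiset Y) (l : NFL X Y) :
    psiL ((x, g) :: l) = mkX x * pureElt g * psiL l := rfl

theorem psiL_append (l k : NFL X Y) : psiL (l ++ k) = psiL l * psiL k := by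
  induction l with
  | nil => rw [List.nil_append, psiL_nil, one_mul]
  | cons a l ih =>
    obtain ⟨x, g⟩ := a
    rw [List.cons_append, psiL_cons, psiL_cons, ih]
    simp [mul_assoc]

/-- interpretation of a normal form -/
noncomputable def psi (t : NF X Y) : CoprodM X Y := pureElt t.1 * psiL t.2

theorem psi_letter_mul (a : X ⊕ Y) (t : NF X Y) :
    psi (nfLetter a * t) = Con.mk' (coCon X Y) (FreeMonoid.of a) * psi t := by
  obtain ⟨d, k⟩ := t
  cases a with
  | inl x =>
    rw [show (nfLetter (Sum.inl x) : NF X Y) * (d, k) = (0, (x, d) :: k) by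
      show nmul _ _ = _
      rw [nfLetter, nmul_ne_nil (by simp), addLast_singleton]
      rw [zero_add]
      rfl]
    rw [psi, psi, psiL_cons, pureElt_zero, one_mul]
    show mkX x * pureElt d * psiL k = _
    rw [mul_assoc]
    rfl
  | inr y =>
    rw [show (nfLetter (Sum.inr y) : NF X Y) * (d, k) = ({y} + d, k) by
      show nmul _ _ = _
      rw [nfLetter, nmul_nil]]
    rw [psi, psi, pureElt_add, pureElt_single, mul_assoc]

theorem psi_nfHom (w : CoprodM X Y) : psi (nfHom X Y w) = w := by
  induction w using Con.induction_on with
  | H w =>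
    induction w using FreeMonoid.recOn with
    | one =>
      rw [show ((1 : FM X Y) : CoprodM X Y) = 1 from rfl, map_one]
      rw [show (1 : NF X Y) = ((0 : Multiset Y), ([] : NFL X Y)) from one_def, psi]
      simp
    | of_mul a w ih =>
      have h2 : ((FreeMonoid.of a * w : FM X Y) : CoprodM X Y) =
          ((FreeMonoid.of a : FM X Y) : CoprodM X Y) * ((w : FM X Y) : CoprodM X Y) := rfl
      rw [h2, map_mul, nfHom_mk, FreeMonoid.lift_eval_of, psi_letter_mul, ih]
      rfl

theorem nfHom_injective_aux {s t : CoprodM X Y} (h : nfHom X Y s = nfHom X Y t) : s = t := by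
  rw [← psi_nfHom s, ← psi_nfHom t, h]

/-- length of a normal form -/
def nlen (t : NF X Y) : ℕ := Multiset.card t.1 + S t.2

theorem nlen_mul (s t : NF X Y) : nlen (s * t) = nlen s + nlen t := by
  obtain ⟨c, l⟩ := s; obtain ⟨d, k⟩ := t
  rcases eq_or_ne l [] with rfl | h
  · rw [mul_def, nmul_nil, nlen, nlen, nlen]
    simp; omega
  · rw [mul_def, nmul_ne_nil h, nlen, nlen, nlen]
    simp [S_addLast h]
    omega

theorem len_mul (s t : CoprodM X Y) : len (s * t) = len s + len t := by
  rw [len, len, len, map_mul]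
  rfl

theorem len_nf (w : CoprodM X Y) : len w = nlen (nfHom X Y w) := by
  induction w using Con.induction_on with
  | H w =>
    induction w using FreeMonoid.recOn with
    | one =>
      rw [show ((1 : FM X Y) : CoprodM X Y) = 1 from rfl, map_one]
      rw [show len (1 : CoprodM X Y) = 0 by rw [len, map_one]; rfl]
      rfl
    | of_mul a w ih =>
      have h2 : ((FreeMonoid.of a * w : FM X Y) : CoprodM X Y) =
          ((FreeMonoid.of a : FM X Y) : CoprodM X Y) * ((w : FM X Y) : CoprodM X Y) := rfl
      rw [h2, len_mul, map_mul, nlen_mul, ih]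
      congr 1
      rw [nfHom_mk, FreeMonoid.lift_eval_of]
      have h3 : len (((FreeMonoid.of a : FM X Y) : CoprodM X Y)) = 1 := rfl
      rw [h3]
      cases a <;> rfl

end CoprodAux
namespace CoprodAux
variable {X Y : Type}

/-- prefix/suffix data of a normal form -/
def psNF : NF X Y → PS Y
  | (c, []) => PS.pure c
  | (c, l) => PS.mixed c (lastG l)

theorem psNF_nil (c : Multiset Y) : psNF ((c, []) : NF X Y) = PS.pure c := rfl
theorem psNF_ne_nil {l : NFL X Y} (h : l ≠ []) (c : Multiset Y) :
    psNF ((c, l) : NF X Y) = PS.mixed c (lastG l) := by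
  cases l with
  | nil => exact absurd rfl h
  | cons a l => rfl

/-- the letter map to PS -/
def psLetter : X ⊕ Y → PS Y
  | Sum.inl _ => PS.mixed 0 0
  | Sum.inr y => PS.pure {y}

theorem psNF_letter_mul (a : X ⊕ Y) (t : NF X Y) :
    psNF (nfLetter a * t) = psLetter a * psNF t := by
  obtain ⟨d, k⟩ := t
  cases a with
  | inl x =>
    rw [show (nfLetter (Sum.inl x) : NF X Y) * (d, k) = (0, (x, d) :: k) by
      show nmul _ _ = _
      rw [nfLetter, nmul_ne_nil (by simp), addLast_singleton]
      rw [zero_add]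
      rfl]
    rcases eq_or_ne k [] with rfl | hk
    · rw [psNF_ne_nil (by simp), psNF_nil, lastG_singleton, psLetter]
      show _ = PS.mul _ _
      simp [PS.mul]
    · rw [psNF_ne_nil (by simp), psNF_ne_nil hk, lastG_cons hk, psLetter]
      show _ = PS.mul _ _
      simp [PS.mul]
  | inr y =>
    rw [show (nfLetter (Sum.inr y) : NF X Y) * (d, k) = ({y} + d, k) by
      show nmul _ _ = _
      rw [nfLetter, nmul_nil]]
    rcases eq_or_ne k [] with rfl | hk
    · rw [psNF_nil, psNF_nil, psLetter]
      show _ = PS.mul _ _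
      simp [PS.mul]
    · rw [psNF_ne_nil hk, psNF_ne_nil hk, psLetter]
      show _ = PS.mul _ _
      simp [PS.mul]

theorem psHom_nf (w : CoprodM X Y) : psHom X Y w = psNF (nfHom X Y w) := by
  induction w using Con.induction_on with
  | H w =>
    induction w using FreeMonoid.recOn with
    | one =>
      rw [show ((1 : FM X Y) : CoprodM X Y) = 1 from rfl, map_one, map_one]
      rfl
    | of_mul a w ih =>
      have h2 : ((FreeMonoid.of a * w : FM X Y) : CoprodM X Y) =
          ((FreeMonoid.of a : FM X Y) : CoprodM X Y) * ((w : FM X Y) : CoprodM X Y) := rfl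
      rw [h2, map_mul, map_mul, nfHom_mk, FreeMonoid.lift_eval_of, psNF_letter_mul, ih]
      congr 1

theorem pre_eq (w : CoprodM X Y) : pre w = (nfHom X Y w).1 := by
  rw [pre, psHom_nf]
  obtain ⟨c, l⟩ := nfHom X Y w
  cases l with
  | nil => rfl
  | cons a l => rfl

theorem suf_nil {w : CoprodM X Y} {c : Multiset Y} (h : nfHom X Y w = (c, [])) :
    suf w = c := by
  rw [suf, psHom_nf, h, psNF_nil]

theorem suf_ne_nil {w : CoprodM X Y} {c : Multiset Y} {l : NFL X Y} (hl : l ≠ [])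
    (h : nfHom X Y w = (c, l)) : suf w = lastG l := by
  rw [suf, psHom_nf, h, psNF_ne_nil hl]

theorem isPure_iff (w : CoprodM X Y) : IsPure w ↔ (nfHom X Y w).2 = [] := by
  constructor
  · rintro ⟨l, rfl⟩
    induction l using FreeMonoid.recOn with
    | one => rw [map_one, map_one]; rfl
    | of_mul y l ih =>
      rw [map_mul, map_mul]
      have h1 : yEmb X Y (FreeMonoid.of y) = ((FreeMonoid.of (Sum.inr y) : FM X Y) : CoprodM X Y) := rfl
      rw [h1, nfHom_mk, FreeMonoid.lift_eval_of]
      have key : ∀ t : NF X Y, ((nfLetter (Sum.inr y) : NF X Y) * t).2 = t.2 := by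
        rintro ⟨d, k⟩
        rfl
      rw [key]
      exact ih
  · intro h
    refine ⟨FreeMonoid.ofList ((nfHom X Y w).1).toList, ?_⟩
    have h2 := psi_nfHom w
    rw [psi, h, psiL_nil, mul_one] at h2
    exact h2

end CoprodAux
namespace CoprodAux
variable {X Y : Type}

theorem listKey : ∀ (lu lx : NFL X Y) (cv cy : Multiset Y) (lv ly : NFL X Y),
    lu ≠ [] → lx ≠ [] → lv ≠ [] → ly ≠ [] →
    addLast lu cv ++ lv = addLast lx cy ++ ly → S lu = S lx →
    lu.length = lx.length := by
  intro lu
  induction lu with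
  | nil => intro lx cv cy lv ly h; exact absurd rfl h
  | cons a lu' IH =>
    intro lx cv cy lv ly _ hlx hlv hly heq hS
    cases lx with
    | nil => exact absurd rfl hlx
    | cons b lx' =>
      rcases eq_or_ne lu' [] with rfl | hu' <;> rcases eq_or_ne lx' [] with rfl | hx'
      · rfl
      · rw [addLast_singleton, addLast_cons hx', List.singleton_append,
          List.cons_append, List.cons.injEq] at heq
        rw [S_cons, S_cons] at hS
        have hc : a.2 + cv = b.2 := by
          have := congrArg Prod.snd heq.1
          simpa using this
        have h1 := congrArg Multiset.card hc
        simp at h1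
        have h2 := one_le_S hx'
        rw [S_nil] at hS
        omega
      · rw [addLast_cons hu', addLast_singleton, List.cons_append,
          List.singleton_append, List.cons.injEq] at heq
        rw [S_cons, S_cons] at hS
        have hc : a.2 = b.2 + cy := by
          have := congrArg Prod.snd heq.1
          simpa using this
        have h1 := congrArg Multiset.card hc
        simp at h1
        have h2 := one_le_S hu'
        rw [S_nil] at hS
        omega
      · rw [addLast_cons hu', addLast_cons hx', List.cons_append,
          List.cons_append, List.cons.injEq] at heq
        rw [S_cons, S_cons] at hS
        have ha : a = b := heq.1
        subst ha
        have := IH lx' cv cy lv ly hu' hx' hlv hly heq.2 (by omega)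
        simp [this]

end CoprodAux
namespace CoprodAux
variable {X Y : Type}

theorem decompNil {w : CoprodM X Y} {c : Multiset Y} (h : nfHom X Y w = (c, [])) :
    w = pureElt c := by
  have h2 := psi_nfHom w
  rw [h, psi, psiL_nil, mul_one] at h2
  exact h2.symm

theorem decomp {w : CoprodM X Y} {c : Multiset Y} {l : NFL X Y} {p : X} {g : Multiset Y}
    (h : nfHom X Y w = (c, l ++ [(p, g)])) :
    w = pureElt c * psiL l * (mkX p) * pureElt g := by
  have h2 := psi_nfHom w
  rw [h, psi, psiL_append, psiL_cons, psiL_nil, mul_one] at h2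
  rw [← h2]
  simp [mul_assoc]

theorem notPure_of_ne_nil {w : CoprodM X Y} {c : Multiset Y} {l : NFL X Y}
    (hl : l ≠ []) (h : nfHom X Y w = (c, l)) : ¬ IsPure w := by
  rw [isPure_iff, h]
  exact hl

theorem simPure {u x : CoprodM X Y} {cu cx : Multiset Y} (hlen : len u = len x)
    (hU : nfHom X Y u = (cu, [])) (hX : nfHom X Y x = (cx, [])) : Sim u x := by
  refine ⟨hlen, Or.inl ⟨?_, ?_⟩⟩ <;> rw [isPure_iff]
  · rw [hU]
  · rw [hX]

theorem simMixed {u x : CoprodM X Y} {cu cx g g' : Multiset Y} {l : NFL X Y} {p : X}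
    (hlen : len u = len x)
    (hU : nfHom X Y u = (cu, l ++ [(p, g)])) (hX : nfHom X Y x = (cx, l ++ [(p, g')]))
    (hc : Multiset.card cu = Multiset.card cx) (hg : Multiset.card g = Multiset.card g') :
    Sim u x := by
  have hpu : pre u = cu := by rw [pre_eq, hU]
  have hpx : pre x = cx := by rw [pre_eq, hX]
  have hsu : suf u = g := by rw [suf_ne_nil (by simp) hU, lastG_concat]
  have hsx : suf x = g' := by rw [suf_ne_nil (by simp) hX, lastG_concat]
  refine ⟨hlen, Or.inr ⟨notPure_of_ne_nil (by simp) hU, notPure_of_ne_nil (by simp) hX,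
    by rw [hpu, hpx]; exact hc, by rw [hsu, hsx]; exact hg,
    psiL l * mkX p, ?_, ?_⟩⟩
  · rw [hpu, hsu, ← mul_assoc]
    exact decomp hU
  · rw [hpx, hsx, ← mul_assoc]
    exact decomp hX

theorem master {u v x y : CoprodM X Y} (heq : u * v = x * y)
    (hlu : len u = len x) (hlv : len v = len y) :
    ∃ W Q : CoprodM X Y,
      u = W * pureElt (suf u) ∧ x = W * pureElt (suf x) ∧
      v = pureElt (pre v) * Q ∧ y = pureElt (pre y) * Q ∧
      suf u + pre v = suf x + pre y ∧
      Sim u x ∧ Sim v y ∧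
      (¬ IsPure x → pre u = pre x) ∧ (¬ IsPure y → suf v = suf y) := by
  rcases hU : nfHom X Y u with ⟨cu, lu⟩
  rcases hV : nfHom X Y v with ⟨cv, lv⟩
  rcases hX : nfHom X Y x with ⟨cx, lx⟩
  rcases hY : nfHom X Y y with ⟨cy, ly⟩
  have hprod : nmul (cu, lu) (cv, lv) = nmul (cx, lx) (cy, ly) := by
    rw [← mul_def, ← mul_def, ← hU, ← hV, ← hX, ← hY, ← map_mul, ← map_mul, heq]
  have hnu : nlen ((cu, lu) : NF X Y) = nlen ((cx, lx) : NF X Y) := by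
    rw [← hU, ← hX, ← len_nf, ← len_nf]; exact hlu
  have hnv : nlen ((cv, lv) : NF X Y) = nlen ((cy, ly) : NF X Y) := by
    rw [← hV, ← hY, ← len_nf, ← len_nf]; exact hlv
  rcases eq_or_ne lx [] with rfl | hx0 <;> rcases eq_or_ne ly [] with rfl | hy0
  · -- x pure, y pure
    have hlu0 : lu = [] := by
      by_contra h
      rw [nmul_ne_nil h, nmul_nil, Prod.mk.injEq] at hprod
      exact addLast_ne_nil h cv (List.append_eq_nil_iff.mp hprod.2).1
    subst hlu0
    rw [nmul_nil, nmul_nil, Prod.mk.injEq] at hprod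
    obtain ⟨hsum, hlv0⟩ := hprod
    subst hlv0
    have e1 : suf u = cu := suf_nil hU
    have e2 : suf x = cx := suf_nil hX
    have e3 : pre v = cv := by rw [pre_eq, hV]
    have e4 : pre y = cy := by rw [pre_eq, hY]
    refine ⟨1, 1, ?_, ?_, ?_, ?_, ?_, simPure hlu hU hX, simPure hlv hV hY, ?_, ?_⟩
    · rw [e1, one_mul]; exact decompNil hU
    · rw [e2, one_mul]; exact decompNil hX
    · rw [e3, mul_one]; exact decompNil hV
    · rw [e4, mul_one]; exact decompNil hY
    · rw [e1, e2, e3, e4]; exact hsum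
    · intro h; exact absurd (by rw [isPure_iff, hX] : IsPure x) h
    · intro h; exact absurd (by rw [isPure_iff, hY] : IsPure y) h
  · -- x pure, y mixed
    have hlu0 : lu = [] := by
      by_contra h
      rw [nmul_ne_nil h, nmul_nil, Prod.mk.injEq] at hprod
      have hcard := congrArg Multiset.card hprod.1
      rw [Multiset.card_add] at hcard
      have h1 : 1 ≤ S lu := one_le_S h
      simp only [nlen] at hnu
      simp only [S_nil] at hnu
      omega
    subst hlu0
    rw [nmul_nil, nmul_nil, Prod.mk.injEq] at hprod
    obtain ⟨hsum, hlv0⟩ := hprod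
    subst hlv0
    -- lv = ly ≠ []
    have e1 : suf u = cu := suf_nil hU
    have e2 : suf x = cx := suf_nil hX
    have e3 : pre v = cv := by rw [pre_eq, hV]
    have e4 : pre y = cy := by rw [pre_eq, hY]
    have esv : suf v = suf y := by
      rw [suf_ne_nil hy0 hV, suf_ne_nil hy0 hY]
    obtain ⟨l₃, p₃, g₃, rfl⟩ := exists_concat hy0
    have simvy : Sim v y := by
      refine simMixed hlv hV hY ?_ rfl
      simp only [nlen] at hnv
      have hcard := congrArg Multiset.card hsum
      rw [Multiset.card_add, Multiset.card_add] at hcard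
      simp only [nlen] at hnu
      simp only [S_nil] at hnu
      omega
    refine ⟨1, psiL (l₃ ++ [(p₃, g₃)]), ?_, ?_, ?_, ?_, ?_, simPure hlu hU hX, simvy, ?_, ?_⟩
    · rw [e1, one_mul]; exact decompNil hU
    · rw [e2, one_mul]; exact decompNil hX
    · rw [e3]
      have h2 := psi_nfHom v
      rw [hV, psi] at h2
      exact h2.symm
    · rw [e4]
      have h2 := psi_nfHom y
      rw [hY, psi] at h2
      exact h2.symm
    · rw [e1, e2, e3, e4]; exact hsum
    · intro h; exact absurd (by rw [isPure_iff, hX] : IsPure x) h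
    · intro _; exact esv
  · -- x mixed, y pure
    have hlu0 : lu ≠ [] := by
      intro h
      subst h
      rw [nmul_nil, nmul_ne_nil hx0, List.append_nil, Prod.mk.injEq] at hprod
      have hcard := congrArg Multiset.card hprod.1
      rw [Multiset.card_add] at hcard
      have h1 : 1 ≤ S lx := one_le_S hx0
      simp only [nlen] at hnu
      simp only [S_nil] at hnu
      omega
    have hlv0 : lv = [] := by
      by_contra h
      rw [nmul_ne_nil hlu0, nmul_ne_nil hx0, List.append_nil, Prod.mk.injEq] at hprod
      have hlast := congrArg lastG hprod.2
      rw [lastG_append _ h, lastG_addLast hx0] at hlast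
      have h1 : 1 + Multiset.card (lastG lv) ≤ S lv := S_lastG h
      simp only [nlen] at hnv
      simp only [S_nil] at hnv
      have hcard := congrArg Multiset.card hlast
      rw [Multiset.card_add] at hcard
      omega
    subst hlv0
    rw [nmul_ne_nil hlu0, nmul_ne_nil hx0, List.append_nil, List.append_nil,
      Prod.mk.injEq] at hprod
    obtain ⟨hcc, hll⟩ := hprod
    subst hcc
    obtain ⟨l₁, p₁, g₁, rfl⟩ := exists_concat hlu0
    obtain ⟨l₂, p₂, g₂, rfl⟩ := exists_concat hx0
    rw [addLast_concat, addLast_concat] at hll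
    obtain ⟨hl12, hsing⟩ := List.append_inj' hll rfl
    rw [List.cons.injEq, Prod.mk.injEq] at hsing
    obtain ⟨⟨hp12, hg⟩, -⟩ := hsing
    subst hl12; subst hp12
    have hSeq : Multiset.card g₁ = Multiset.card g₂ := by
      simp only [nlen] at hnu
      simp only [S_append, S_cons, S_nil] at hnu
      omega
    have e1 : suf u = g₁ := by rw [suf_ne_nil (by simp) hU, lastG_concat]
    have e2 : suf x = g₂ := by rw [suf_ne_nil (by simp) hX, lastG_concat]
    have e3 : pre v = cv := by rw [pre_eq, hV]
    have e4 : pre y = cy := by rw [pre_eq, hY]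
    refine ⟨pureElt cu * psiL l₁ * mkX p₁, 1, ?_, ?_, ?_, ?_, ?_,
      simMixed hlu hU hX rfl hSeq, simPure hlv hV hY, ?_, ?_⟩
    · rw [e1]; exact decomp hU
    · rw [e2]; exact decomp hX
    · rw [e3, mul_one]; exact decompNil hV
    · rw [e4, mul_one]; exact decompNil hY
    · rw [e1, e2, e3, e4]; exact hg
    · intro _; rw [pre_eq, pre_eq, hU, hX]
    · intro h; exact absurd (by rw [isPure_iff, hY] : IsPure y) h
  · -- both mixed
    have hlu0 : lu ≠ [] := by
      intro h
      subst h
      rw [nmul_nil, nmul_ne_nil hx0, Prod.mk.injEq] at hprod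
      have hcard := congrArg Multiset.card hprod.1
      rw [Multiset.card_add] at hcard
      have h1 : 1 ≤ S lx := one_le_S hx0
      simp only [nlen] at hnu
      simp only [S_nil] at hnu
      omega
    have hlv0 : lv ≠ [] := by
      intro h
      subst h
      rw [nmul_ne_nil hlu0, nmul_ne_nil hx0, List.append_nil, Prod.mk.injEq] at hprod
      have hlast := congrArg lastG hprod.2
      rw [lastG_addLast hlu0, lastG_append _ hy0] at hlast
      have h1 : 1 + Multiset.card (lastG ly) ≤ S ly := S_lastG hy0
      simp only [nlen] at hnv
      simp only [S_nil] at hnv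
      have hcard := congrArg Multiset.card hlast
      rw [Multiset.card_add] at hcard
      omega
    rw [nmul_ne_nil hlu0, nmul_ne_nil hx0, Prod.mk.injEq] at hprod
    obtain ⟨hcc, hll⟩ := hprod
    subst hcc
    have hSeq : S lu = S lx := by
      simp only [nlen] at hnu
      omega
    have hlen12 : lu.length = lx.length :=
      listKey lu lx cv cy lv ly hlu0 hx0 hlv0 hy0 hll hSeq
    obtain ⟨hal, hly⟩ := List.append_inj hll (by
      rw [addLast_length, addLast_length, hlen12])
    subst hly
    obtain ⟨l₁, p₁, g₁, rfl⟩ := exists_concat hlu0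
    obtain ⟨l₂, p₂, g₂, rfl⟩ := exists_concat hx0
    rw [addLast_concat, addLast_concat] at hal
    obtain ⟨hl12, hsing⟩ := List.append_inj' hal rfl
    rw [List.cons.injEq, Prod.mk.injEq] at hsing
    obtain ⟨⟨hp12, hg⟩, -⟩ := hsing
    subst hl12; subst hp12
    have hgcard : Multiset.card g₁ = Multiset.card g₂ := by
      simp only [S_append, S_cons, S_nil] at hSeq
      omega
    have e1 : suf u = g₁ := by rw [suf_ne_nil (by simp) hU, lastG_concat]
    have e2 : suf x = g₂ := by rw [suf_ne_nil (by simp) hX, lastG_concat]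
    have e3 : pre v = cv := by rw [pre_eq, hV]
    have e4 : pre y = cy := by rw [pre_eq, hY]
    have esv : suf v = suf y := by
      rw [suf_ne_nil hlv0 hV, suf_ne_nil hlv0 hY]
    obtain ⟨l₃, p₃, g₃, rfl⟩ := exists_concat hlv0
    have simvy : Sim v y := by
      refine simMixed hlv hV hY ?_ rfl
      simp only [nlen] at hnv
      omega
    refine ⟨pureElt cu * psiL l₁ * mkX p₁, psiL (l₃ ++ [(p₃, g₃)]), ?_, ?_, ?_, ?_, ?_,
      simMixed hlu hU hX rfl hgcard, simvy, ?_, ?_⟩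
    · rw [e1]; exact decomp hU
    · rw [e2]; exact decomp hX
    · rw [e3]
      have h2 := psi_nfHom v
      rw [hV, psi] at h2
      exact h2.symm
    · rw [e4]
      have h2 := psi_nfHom y
      rw [hY, psi] at h2
      exact h2.symm
    · rw [e1, e2, e3, e4]; exact hg
    · intro _; rw [pre_eq, pre_eq, hU, hX]
    · intro _; exact esv

end CoprodAux

open CoprodAux in
/-- Lemma 3.7: if `s(x)` is maximal among the suffixes in `supp a ∩ [x]` (or
among those with prefix `p(x)`, when `x` is non-pure), and symmetrically `p(y)`
is maximal, then `xy ∈ supp (ab)`. -/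
theorem coprod_mul_support_mem {X Y k : Type} [Field k]
    [LinearOrder (CoprodM X Y)]
    (hcompat : ∀ a b c : CoprodM X Y, a < b → a * c < b * c ∧ c * a < c * b)
    (a b : MonoidAlgebra k (CoprodM X Y)) (m n : ℕ)
    (ha : ∀ w ∈ a.coeff.support, len w = m) (hb : ∀ w ∈ b.coeff.support, len w = n)
    (x y : CoprodM X Y) (hx : x ∈ a.coeff.support) (hy : y ∈ b.coeff.support)
    (h1 : (∀ w ∈ a.coeff.support, Sim w x →
            pureElt (X := X) (suf w) ≤ pureElt (X := X) (suf x)) ∨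
          (¬ IsPure x ∧ ∀ w ∈ a.coeff.support, Sim w x → pre w = pre x →
            pureElt (X := X) (suf w) ≤ pureElt (X := X) (suf x)))
    (h2 : (∀ w ∈ b.coeff.support, Sim w y →
            pureElt (X := X) (pre w) ≤ pureElt (X := X) (pre y)) ∨
          (¬ IsPure y ∧ ∀ w ∈ b.coeff.support, Sim w y → suf w = suf y →
            pureElt (X := X) (pre w) ≤ pureElt (X := X) (pre y))) :
    x * y ∈ (a * b).coeff.support := by
    classical
  have key : ∀ u ∈ a.coeff.support, ∀ v ∈ b.coeff.support, u * v = x * y → u = x ∧ v = y := by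
    intro u hu v hv huv
    have hlu : len u = len x := by rw [ha u hu, ha x hx]
    have hlv : len v = len y := by rw [hb v hv, hb y hy]
    obtain ⟨W, Q, du, dx, dv, dy, hsum, simux, simvy, hpre, hsuf⟩ := master huv hlu hlv
    have le1 : pureElt (X := X) (suf u) ≤ pureElt (suf x) := by
      rcases h1 with H | ⟨hnp, H⟩
      · exact H u hu simux
      · exact H u hu simux (hpre hnp)
    have le2 : pureElt (X := X) (pre v) ≤ pureElt (pre y) := by
      rcases h2 with H | ⟨hnp, H⟩
      · exact H v hv simvy
      · exact H v hv simvy (hsuf hnp)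
    have peq : pureElt (X := X) (suf u) * pureElt (pre v)
        = pureElt (suf x) * pureElt (pre y) := by
      rw [← pureElt_add, ← pureElt_add, hsum]
    have e1 : pureElt (X := X) (suf u) = pureElt (suf x) := by
      by_contra hne
      have hlt := lt_of_le_of_ne le1 hne
      have l1 := (hcompat _ _ (pureElt (pre v)) hlt).1
      have l2 : pureElt (X := X) (suf x) * pureElt (pre v)
          ≤ pureElt (suf x) * pureElt (pre y) := by
        rcases lt_or_eq_of_le le2 with h | h
        · exact le_of_lt (hcompat _ _ _ h).2
        · rw [h]
      exact absurd peq (ne_of_lt (lt_of_lt_of_le l1 l2))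
    have hux : u = x := by rw [du, e1, ← dx]
    refine ⟨hux, ?_⟩
    subst hux
    by_contra hne
    rcases lt_or_gt_of_ne hne with h | h
    · exact absurd huv (ne_of_lt (hcompat _ _ u h).2)
    · exact absurd huv.symm (ne_of_lt (hcompat _ _ u h).2)
  have hcoeff : (a * b).coeff (x * y) = a.coeff x * b.coeff y := by
    rw [MonoidAlgebra.mul_apply, Finsupp.sum]
    rw [Finset.sum_eq_single_of_mem x hx]
    · rw [Finsupp.sum, Finset.sum_eq_single_of_mem y hy]
      · rw [if_pos rfl]
      · intro v hv hne
        rw [if_neg]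
        intro hc
        exact hne (key x hx v hv hc).2
    · intro u hu hne
      rw [Finsupp.sum]
      apply Finset.sum_eq_zero
      intro v hv
      rw [if_neg]
      intro hc
      exact hne (key u hu v hv hc).1
  rw [Finsupp.mem_support_iff, hcoeff]
  exact mul_ne_zero (Finsupp.mem_support_iff.mp hx) (Finsupp.mem_support_iff.mp hy)
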